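/- For any $x, \delta \in \mathbb{R}^n$ and $p \geq 2$, letting $r_i = |x_i|^{p-2}$ and $g_i = p\,|x_i|^{p-2} x_i$, we have $\frac{p}{8}\langle r, \delta^2 \rangle + \frac{1}{2^{p+1}}\|\delta\|_p^p \leq \|x+\delta\|_p^p - \|x\|_p^p - \langle g, \delta \rangle \leq 2p^2 \langle r, \delta^2 \rangle + p^p \|\delta\|_p^p$. -/

import Mathlib

open Real

open intervalIntegral
set_option maxHeartbeats 1000000

lemma st12_abs_rpow_cont {q : ℝ} (hq : 0 ≤ q) : Continuous fun x : ℝ => |x| ^ q :=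
  continuous_abs.rpow_const fun x => Or.inr hq

lemma st12_sq_abs_rpow (t r : ℝ) : (t ^ 2) ^ (r / 2) = |t| ^ r := by
  rw [← sq_abs, ← Real.rpow_natCast |t| 2, ← Real.rpow_mul (abs_nonneg t)]
  congr 1; ring

lemma st12_hasDerivAt_abs_rpow {p : ℝ} (hp : 2 ≤ p) (t : ℝ) :
    HasDerivAt (fun t : ℝ => |t| ^ p) (p * |t| ^ (p - 2) * t) t := by
  have h1 : HasDerivAt (fun t : ℝ => t ^ 2) (2 * t) t := by
    simpa [mul_comm] using hasDerivAt_pow 2 t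
  have h2 := h1.rpow_const (p := p / 2) (Or.inr (by linarith))
  have hfun : (fun t : ℝ => |t| ^ p) = fun t : ℝ => (t ^ 2) ^ (p / 2) := by
    funext t; rw [st12_sq_abs_rpow]
  rw [hfun]
  convert h2 using 1
  have he : p / 2 - 1 = (p - 2) / 2 := by ring
  rw [he, st12_sq_abs_rpow]
  ring

lemma st12_hasDerivAt_g {p : ℝ} (hp : 2 ≤ p) (t : ℝ) :
    HasDerivAt (fun t : ℝ => p * |t| ^ (p - 2) * t) (p * (p - 1) * |t| ^ (p - 2)) t := by
  rcases eq_or_lt_of_le hp with h2 | h2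
  · have hfun : (fun t : ℝ => p * |t| ^ (p - 2) * t) = fun t : ℝ => p * t := by
      funext s; rw [← h2]; norm_num
    rw [hfun, ← h2]
    norm_num
    simpa using (hasDerivAt_id t).const_mul (2:ℝ)
  · rcases eq_or_ne t 0 with ht | ht
    · subst ht
      have h0 : |(0:ℝ)| ^ (p - 2) = 0 := by
        rw [abs_zero, Real.zero_rpow (by linarith : p - 2 ≠ 0)]
      rw [hasDerivAt_iff_tendsto_slope, h0, mul_zero]
      have hcong : ∀ x ∈ ({(0:ℝ)}ᶜ : Set ℝ),
          p * |x| ^ (p - 2) = slope (fun t : ℝ => p * |t| ^ (p - 2) * t) 0 x := by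
        intro x hx
        have hx0 : x ≠ 0 := hx
        simp [slope_def_field, h0, mul_div_assoc, div_self hx0]
      have hlim : Filter.Tendsto (fun x : ℝ => p * |x| ^ (p - 2)) (nhdsWithin 0 {(0:ℝ)}ᶜ) (nhds 0) := by
        have hb := ((st12_abs_rpow_cont (by linarith : (0:ℝ) ≤ p - 2)).tendsto 0).const_mul p
        rw [h0, mul_zero] at hb
        exact hb.mono_left nhdsWithin_le_nhds
      exact hlim.congr' (Filter.eventuallyEq_of_mem self_mem_nhdsWithin hcong)
    · have hsq : t ^ 2 ≠ 0 := pow_ne_zero 2 ht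
      have hsqpos : (0:ℝ) < t ^ 2 := (pow_ne_zero 2 ht).lt_of_le' (sq_nonneg t)
      have h1 : HasDerivAt (fun x : ℝ => (x ^ 2) ^ ((p - 2) / 2))
          (2 * t * ((p - 2) / 2) * (t ^ 2) ^ ((p - 2) / 2 - 1)) t := by
        have h0' : HasDerivAt (fun x : ℝ => x ^ 2) (2 * t) t := by
          simpa [mul_comm] using hasDerivAt_pow 2 t
        exact h0'.rpow_const (Or.inl hsq)
      have h3 := (h1.mul (hasDerivAt_id t)).const_mul p
      have hfun : (fun t : ℝ => p * |t| ^ (p - 2) * t)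
          = fun x : ℝ => p * ((x ^ 2) ^ ((p - 2) / 2) * x) := by
        funext s; rw [st12_sq_abs_rpow, mul_assoc]
      rw [hfun]
      refine h3.congr_deriv ?_
      symm
      have hkey : (t ^ 2) ^ ((p - 2) / 2 - 1) * t ^ 2 = (t ^ 2) ^ ((p - 2) / 2) := by
        rw [show (t ^ 2) ^ ((p - 2) / 2 - 1) * t ^ 2
              = (t ^ 2) ^ ((p - 2) / 2 - 1) * (t ^ 2) ^ (1:ℝ) by rw [Real.rpow_one],
          ← Real.rpow_add hsqpos]
        congr 1; ring
      simp only [id_eq]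
      rw [← st12_sq_abs_rpow, ← hkey]
      ring

lemma st12_cont_aux {p : ℝ} (hp : 2 ≤ p) (a d : ℝ) :
    Continuous fun s : ℝ => (1 - s) * |a + s * d| ^ (p - 2) :=
  (continuous_const.sub continuous_id).mul
    ((st12_abs_rpow_cont (by linarith : (0:ℝ) ≤ p - 2)).comp
      (continuous_const.add (continuous_id.mul continuous_const)))

lemma st12_rep {p : ℝ} (hp : 2 ≤ p) (a d : ℝ) :
    |a + d| ^ p - |a| ^ p - (p * |a| ^ (p - 2) * a) * d
      = p * (p - 1) * d ^ 2 * ∫ s in (0:ℝ)..1, (1 - s) * |a + s * d| ^ (p - 2) := by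
  set φ : ℝ → ℝ := fun s =>
    |a + d| ^ p - |a + s * d| ^ p - (p * |a + s * d| ^ (p - 2) * (a + s * d)) * ((1 - s) * d)
    with hφ
  have hderiv : ∀ s : ℝ, HasDerivAt φ
      (-(p * (p - 1) * d ^ 2 * ((1 - s) * |a + s * d| ^ (p - 2)))) s := by
    intro s
    have haff : HasDerivAt (fun s : ℝ => a + s * d) d s := by
      simpa using (hasDerivAt_id s).mul_const d |>.const_add a
    have h1 : HasDerivAt (fun s : ℝ => |a + s * d| ^ p)
        ((p * |a + s * d| ^ (p - 2) * (a + s * d)) * d) s :=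
      by have h := (st12_hasDerivAt_abs_rpow hp (a + s * d)).comp s haff; exact h
    have h2 : HasDerivAt (fun s : ℝ => p * |a + s * d| ^ (p - 2) * (a + s * d))
        ((p * (p - 1) * |a + s * d| ^ (p - 2)) * d) s :=
      by have h := (st12_hasDerivAt_g hp (a + s * d)).comp s haff; exact h
    have h3 : HasDerivAt (fun s : ℝ => (1 - s) * d) (-d) s := by
      simpa using ((hasDerivAt_id s).const_sub 1).mul_const d
    have h4 := (h2.mul h3)
    have h5 := ((h1.const_sub (|a + d| ^ p)).sub h4)
    refine h5.congr_deriv ?_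
    symm
    ring
  have hcont : Continuous fun s : ℝ =>
      -(p * (p - 1) * d ^ 2 * ((1 - s) * |a + s * d| ^ (p - 2))) :=
    (continuous_const.mul (st12_cont_aux hp a d)).neg
  have hftc := intervalIntegral.integral_eq_sub_of_hasDerivAt
    (f := φ) (f' := fun s => -(p * (p - 1) * d ^ 2 * ((1 - s) * |a + s * d| ^ (p - 2))))
    (fun s _ => hderiv s) (hcont.intervalIntegrable 0 1)
  rw [intervalIntegral.integral_neg, intervalIntegral.integral_const_mul] at hftc
  have hφ1 : φ 1 = 0 := by simp [hφ]
  have hφ0 : φ 0 = |a + d| ^ p - |a| ^ p - (p * |a| ^ (p - 2) * a) * d := by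
    simp [hφ]
  rw [hφ1, hφ0] at hftc
  linarith [hftc]

lemma st12_rpow_sub_one {x r : ℝ} (hx : 0 ≤ x) (hr : 1 ≤ r) : x ^ r = x ^ (r - 1) * x := by
  rcases eq_or_lt_of_le hx with h | h
  · rw [← h, Real.zero_rpow (by linarith : r ≠ 0), mul_zero]
  · calc x ^ r = x ^ (r - 1 + 1) := by congr 1; ring
      _ = x ^ (r - 1) * x ^ (1:ℝ) := Real.rpow_add h _ _
      _ = x ^ (r - 1) * x := by rw [Real.rpow_one]

lemma st12_cont_aux2 {p : ℝ} (hp : 2 ≤ p) (c : ℝ) :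
    Continuous fun s : ℝ => (1 - s) * |c + s| ^ (p - 2) :=
  (continuous_const.sub continuous_id).mul
    ((st12_abs_rpow_cont (by linarith : (0:ℝ) ≤ p - 2)).comp
      (continuous_const.add continuous_id))

lemma st12_E3 {p : ℝ} (hp : 2 ≤ p) {t : ℝ} (ht0 : 0 ≤ t) (ht1 : t ≤ 1) :
    ∫ s in t..1, (1 - s) * |(-t) + s| ^ (p - 2)
      = (1 - t) ^ p / (p * (p - 1)) := by
  have hp1 : (1:ℝ) ≤ p - 1 := by linarith
  set F : ℝ → ℝ := fun s => (1 - t) * (s - t) ^ (p - 1) / (p - 1) - (s - t) ^ p / p with hF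
  have hderiv : ∀ s ∈ Set.uIcc t 1, HasDerivAt F ((1 - s) * |(-t) + s| ^ (p - 2)) s := by
    intro s hs
    rw [Set.uIcc_of_le ht1, Set.mem_Icc] at hs
    have hst : (0:ℝ) ≤ s - t := by linarith [hs.1]
    have hbase : HasDerivAt (fun s : ℝ => s - t) 1 s := by
      simpa using (hasDerivAt_id s).sub_const t
    have h1 := (hbase.rpow_const (p := p - 1) (Or.inr hp1)).const_mul (1 - t) |>.div_const (p - 1)
    have h2 := (hbase.rpow_const (p := p) (Or.inr (by linarith))).div_const p
    have h5 := h1.sub h2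
    refine h5.congr_deriv ?_
    symm
    have habs : |(-t) + s| = s - t := by rw [abs_of_nonneg (by linarith [hs.1])]; ring
    have e1 : (s - t) ^ (p - 1) = (s - t) ^ (p - 1 - 1) * (s - t) := st12_rpow_sub_one hst hp1
    rw [habs]
    have e2 : p - 1 - 1 = p - 2 := by ring
    rw [e1, e2]
    field_simp
    ring
  rw [intervalIntegral.integral_eq_sub_of_hasDerivAt hderiv
    ((st12_cont_aux2 hp (-t)).intervalIntegrable t 1)]
  have hz : ((t:ℝ) - t) = 0 := by ring
  have h0a : ((1:ℝ) - t) * (t - t) ^ (p - 1) / (p - 1) = 0 := by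
    rw [hz, Real.zero_rpow (by linarith : p - 1 ≠ 0)]; ring
  have h0b : ((t:ℝ) - t) ^ p / p = 0 := by
    rw [hz, Real.zero_rpow (by linarith : p ≠ 0)]; ring
  have hmain : ((1:ℝ) - t) * (1 - t) ^ (p - 1) = (1 - t) ^ p := by
    rw [st12_rpow_sub_one (by linarith : (0:ℝ) ≤ 1 - t) (by linarith : 1 ≤ p)]; ring
  rw [hF]
  simp only [h0a, h0b]
  rw [hmain]
  field_simp
  ring

lemma st12_E4 {p : ℝ} (hp : 2 ≤ p) {t : ℝ} (ht0 : 0 ≤ t) (ht1 : t ≤ 1) :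
    ∫ s in (0:ℝ)..t, (1 - s) * |(-t) + s| ^ (p - 2)
      = (1 - t) * t ^ (p - 1) / (p - 1) + t ^ p / p := by
  have hp1 : (1:ℝ) ≤ p - 1 := by linarith
  set F : ℝ → ℝ := fun s => -((1 - t) * (t - s) ^ (p - 1) / (p - 1)) - (t - s) ^ p / p with hF
  have hderiv : ∀ s ∈ Set.uIcc (0:ℝ) t, HasDerivAt F ((1 - s) * |(-t) + s| ^ (p - 2)) s := by
    intro s hs
    rw [Set.uIcc_of_le ht0, Set.mem_Icc] at hs
    have hst : (0:ℝ) ≤ t - s := by linarith [hs.2]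
    have hbase : HasDerivAt (fun s : ℝ => t - s) (-1) s := by
      simpa using (hasDerivAt_id s).const_sub t
    have h1 := ((hbase.rpow_const (p := p - 1) (Or.inr hp1)).const_mul (1 - t)
      |>.div_const (p - 1)).neg
    have h2 := (hbase.rpow_const (p := p) (Or.inr (by linarith))).div_const p
    have h5 := h1.sub h2
    refine h5.congr_deriv ?_
    symm
    have habs : |(-t) + s| = t - s := by rw [abs_of_nonpos (by linarith [hs.2])]; ring
    have e1 : (t - s) ^ (p - 1) = (t - s) ^ (p - 1 - 1) * (t - s) := st12_rpow_sub_one hst hp1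
    rw [habs]
    have e2 : p - 1 - 1 = p - 2 := by ring
    rw [e1, e2]
    field_simp
    ring
  rw [intervalIntegral.integral_eq_sub_of_hasDerivAt hderiv
    ((st12_cont_aux2 hp (-t)).intervalIntegrable 0 t)]
  have hz : ((t:ℝ) - t) = 0 := by ring
  have h0a : -(((1:ℝ) - t) * (t - t) ^ (p - 1) / (p - 1)) = 0 := by
    rw [hz, Real.zero_rpow (by linarith : p - 1 ≠ 0)]; ring
  have h0b : ((t:ℝ) - t) ^ p / p = 0 := by
    rw [hz, Real.zero_rpow (by linarith : p ≠ 0)]; ring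
  rw [hF]
  simp only [sub_zero, h0a, h0b]
  ring

lemma st12_E2 {p : ℝ} (hp : 2 ≤ p) :
    ∫ s in (0:ℝ)..1, (1 - s) ^ (p - 1) = 1 / p := by
  have hp1 : (1:ℝ) ≤ p - 1 := by linarith
  set F : ℝ → ℝ := fun s => -((1 - s) ^ p / p) with hF
  have hderiv : ∀ s ∈ Set.uIcc (0:ℝ) 1, HasDerivAt F ((1 - s) ^ (p - 1)) s := by
    intro s hs
    rw [Set.uIcc_of_le zero_le_one, Set.mem_Icc] at hs
    have hbase : HasDerivAt (fun s : ℝ => 1 - s) (-1) s := by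
      simpa using (hasDerivAt_id s).const_sub 1
    have h1 := ((hbase.rpow_const (p := p) (Or.inr (by linarith))).div_const p).neg
    refine h1.congr_deriv ?_
    symm
    have hp0 : p ≠ 0 := by linarith
    field_simp
  have hcont : ContinuousOn (fun s : ℝ => (1 - s) ^ (p - 1)) (Set.uIcc (0:ℝ) 1) := by
    have hc2 : Continuous fun s : ℝ => |1 - s| ^ (p - 1) :=
      (st12_abs_rpow_cont (by linarith : (0:ℝ) ≤ p - 1)).comp
        (continuous_const.sub continuous_id)
    refine hc2.continuousOn.congr ?_
    intro s hs
    rw [Set.uIcc_of_le zero_le_one, Set.mem_Icc] at hs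
    simp only []
    rw [abs_of_nonneg (by linarith [hs.2] : (0:ℝ) ≤ 1 - s)]
  rw [intervalIntegral.integral_eq_sub_of_hasDerivAt hderiv hcont.intervalIntegrable]
  rw [hF]
  simp only [sub_self, sub_zero]
  rw [Real.zero_rpow (by linarith : p ≠ 0), Real.one_rpow]
  ring

lemma st12_half : (∫ s in (0:ℝ)..1, (1 - s)) = 1/2 := by
  rw [intervalIntegral.integral_sub intervalIntegrable_const intervalIntegrable_id,
    integral_const, integral_id]
  norm_num

lemma st12_num {p : ℝ} (hp : 2 ≤ p) : 2 * p + 2 ^ (p - 1) ≤ (3:ℝ) ^ p := by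
  have hX : (0:ℝ) < 2 ^ (p - 1) := Real.rpow_pos_of_pos two_pos _
  have hb : p ≤ 2 ^ (p - 1) := by
    have := one_add_mul_self_le_rpow_one_add (by norm_num : (-1:ℝ) ≤ 1)
      (by linarith : 1 ≤ p - 1)
    norm_num at this
    linarith
  have h32 : (9/4:ℝ) ≤ (3/2) ^ p := by
    have h1 : ((3/2:ℝ)) ^ (2:ℝ) ≤ (3/2) ^ p :=
      Real.rpow_le_rpow_of_exponent_le (by norm_num) hp
    have h2 : ((3/2:ℝ)) ^ (2:ℝ) = 9/4 := by
      rw [show (2:ℝ) = ((2:ℕ):ℝ) by norm_num, Real.rpow_natCast]; norm_num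
    linarith
  have h2p : (2:ℝ) ^ p = 2 * 2 ^ (p - 1) := by
    rw [show p = 1 + (p - 1) by ring, Real.rpow_add two_pos, Real.rpow_one]
    ring_nf
  have h3p : (3:ℝ) ^ p = (3/2) ^ p * (2 * 2 ^ (p - 1)) := by
    rw [← h2p, ← Real.mul_rpow (by norm_num) (by norm_num)]
    norm_num
  nlinarith [mul_le_mul_of_nonneg_right h32 hX.le]

lemma st12_core {p : ℝ} (hp : 2 ≤ p) (c : ℝ) :
    p / 8 * |c| ^ (p - 2) + 1 / 2 ^ (p + 1)
      ≤ p * (p - 1) * ∫ s in (0:ℝ)..1, (1 - s) * |c + s| ^ (p - 2) := by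
  have hq : (0:ℝ) ≤ p - 2 := by linarith
  have hpp : (0:ℝ) < p * (p - 1) := by nlinarith
  have hEpos : (0:ℝ) < 2 ^ (p + 1) := Real.rpow_pos_of_pos two_pos _
  have h8 : (2:ℝ) ^ (3:ℝ) = 8 := by
    rw [show (3:ℝ) = ((3:ℕ):ℝ) by norm_num, Real.rpow_natCast]; norm_num
  have hE8 : 1 / 2 ^ (p + 1) ≤ (1:ℝ) / 8 := by
    rw [← h8]
    exact one_div_le_one_div_of_le (by positivity)
      (Real.rpow_le_rpow_of_exponent_le (by norm_num) (by linarith))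
  have hTnn : (0:ℝ) ≤ |c| ^ (p - 2) := Real.rpow_nonneg (abs_nonneg c) _
  have hInt : ∀ u v : ℝ, IntervalIntegrable
      (fun s : ℝ => (1 - s) * |c + s| ^ (p - 2)) MeasureTheory.volume u v :=
    fun u v => (st12_cont_aux2 hp c).intervalIntegrable u v
  rcases le_or_gt 0 c with hc | hc
  · -- c ≥ 0
    have hJ1 : 1 / (p * (p - 1)) ≤ ∫ s in (0:ℝ)..1, (1 - s) * |c + s| ^ (p - 2) := by
      have hm : ∫ s in (0:ℝ)..1, (1 - s) * |(-(0:ℝ)) + s| ^ (p - 2)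
          ≤ ∫ s in (0:ℝ)..1, (1 - s) * |c + s| ^ (p - 2) := by
        apply intervalIntegral.integral_mono_on zero_le_one
          ((st12_cont_aux2 hp (-0)).intervalIntegrable 0 1) (hInt 0 1)
        intro s hs
        rw [Set.mem_Icc] at hs
        have h1 : |(-(0:ℝ)) + s| ≤ |c + s| := by
          rw [abs_of_nonneg (by linarith), abs_of_nonneg (by linarith)]
          linarith
        exact mul_le_mul_of_nonneg_left
          (Real.rpow_le_rpow (abs_nonneg _) h1 hq) (by linarith [hs.2])
      rw [st12_E3 hp le_rfl zero_le_one] at hm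
      norm_num [Real.one_rpow] at hm
      rw [one_div, mul_inv, mul_comm]
      exact hm
    have hJ2 : |c| ^ (p - 2) / 2 ≤ ∫ s in (0:ℝ)..1, (1 - s) * |c + s| ^ (p - 2) := by
      have hm : ∫ s in (0:ℝ)..1, (1 - s) * |c| ^ (p - 2)
          ≤ ∫ s in (0:ℝ)..1, (1 - s) * |c + s| ^ (p - 2) := by
        apply intervalIntegral.integral_mono_on zero_le_one
          (((continuous_const.sub continuous_id).mul continuous_const).intervalIntegrable 0 1)
          (hInt 0 1)
        intro s hs
        rw [Set.mem_Icc] at hs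
        simp only [Pi.mul_apply, Pi.sub_apply, id_eq]
        have h1 : |c| ≤ |c + s| := by
          rw [abs_of_nonneg hc, abs_of_nonneg (by linarith)]
          linarith [hs.1]
        exact mul_le_mul_of_nonneg_left
          (Real.rpow_le_rpow (abs_nonneg _) h1 hq) (by linarith [hs.2])
      rw [intervalIntegral.integral_mul_const, st12_half] at hm
      linarith
    have h1' := mul_le_mul_of_nonneg_left hJ1 hpp.le
    have h2' := mul_le_mul_of_nonneg_left hJ2 hpp.le
    have he1 : p * (p - 1) * (1 / (p * (p - 1))) = 1 := by rw [mul_one_div, div_self hpp.ne']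
    rw [he1] at h1'
    nlinarith [mul_nonneg (mul_nonneg (by linarith : (0:ℝ) ≤ p) hTnn)
      (by linarith : (0:ℝ) ≤ 2 * p - 3)]
  · -- c < 0
    set t : ℝ := -c with htdef
    have ht0 : 0 < t := by simp only [htdef]; linarith
    have habs : |c| = t := by rw [abs_of_neg hc]
    have hcne : c = -t := by simp [htdef]
    clear_value t
    rcases le_or_gt 1 t with ht1 | ht1
    · -- t ≥ 1
      have hlow : ContinuousOn (fun s : ℝ => (1 - s) ^ (p - 1) * t ^ (p - 2))
          (Set.uIcc (0:ℝ) 1) := by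
        have hc2 : Continuous fun s : ℝ => |1 - s| ^ (p - 1) * t ^ (p - 2) :=
          ((st12_abs_rpow_cont (by linarith : (0:ℝ) ≤ p - 1)).comp
            (continuous_const.sub continuous_id)).mul continuous_const
        refine hc2.continuousOn.congr ?_
        intro s hs
        rw [Set.uIcc_of_le zero_le_one, Set.mem_Icc] at hs
        simp only []
        rw [abs_of_nonneg (by linarith [hs.2] : (0:ℝ) ≤ 1 - s)]
      have hm : ∫ s in (0:ℝ)..1, (1 - s) ^ (p - 1) * t ^ (p - 2)
          ≤ ∫ s in (0:ℝ)..1, (1 - s) * |c + s| ^ (p - 2) := by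
        apply intervalIntegral.integral_mono_on zero_le_one
          hlow.intervalIntegrable (hInt 0 1)
        intro s hs
        rw [Set.mem_Icc] at hs
        have h1s : (0:ℝ) ≤ 1 - s := by linarith [hs.2]
        have hab : (1 - s) * t ≤ |c + s| := by
          rw [hcne, abs_of_nonpos (by linarith [hs.2] : -t + s ≤ 0)]
          nlinarith [hs.1, hs.2]
        calc (1 - s) ^ (p - 1) * t ^ (p - 2)
            = (1 - s) * ((1 - s) ^ (p - 2) * t ^ (p - 2)) := by
              rw [st12_rpow_sub_one h1s (by linarith : (1:ℝ) ≤ p - 1)]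
              have : p - 1 - 1 = p - 2 := by ring
              rw [this]; ring
          _ = (1 - s) * ((1 - s) * t) ^ (p - 2) := by
              rw [Real.mul_rpow h1s ht0.le]
          _ ≤ (1 - s) * |c + s| ^ (p - 2) :=
              mul_le_mul_of_nonneg_left
                (Real.rpow_le_rpow (by positivity) hab hq) h1s
      rw [intervalIntegral.integral_mul_const, st12_E2 hp] at hm
      have hT1 : (1:ℝ) ≤ t ^ (p - 2) := by
        have h := Real.rpow_le_rpow zero_le_one ht1 hq
        rwa [Real.one_rpow] at h
      have h' := mul_le_mul_of_nonneg_left hm hpp.le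
      have heq : p * (p - 1) * (1 / p * t ^ (p - 2)) = (p - 1) * t ^ (p - 2) := by
        field_simp
      rw [heq] at h'
      rw [habs]
      nlinarith [mul_le_mul_of_nonneg_left hT1 (by linarith : (0:ℝ) ≤ 7 * p / 8 - 1)]
    · -- 0 < t < 1
      have hsplit : (∫ s in (0:ℝ)..t, (1 - s) * |c + s| ^ (p - 2))
          + ∫ s in t..1, (1 - s) * |c + s| ^ (p - 2)
          = ∫ s in (0:ℝ)..1, (1 - s) * |c + s| ^ (p - 2) :=
        intervalIntegral.integral_add_adjacent_intervals (hInt 0 t) (hInt t 1)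
      rw [hcne] at hsplit
      rw [st12_E4 hp ht0.le ht1.le, st12_E3 hp ht0.le ht1.le] at hsplit
      set T : ℝ := t ^ (p - 2) with hT
      set U : ℝ := (1 - t) ^ p with hU
      clear_value T U
      have hTnn' : (0:ℝ) ≤ T := by rw [hT]; exact Real.rpow_nonneg ht0.le _
      have hUnn : (0:ℝ) ≤ U := by rw [hU]; exact Real.rpow_nonneg (by linarith) _
      have htp1 : t ^ (p - 1) = T * t := by
        rw [hT]
        rw [st12_rpow_sub_one ht0.le (by linarith : (1:ℝ) ≤ p - 1)]
        have : p - 1 - 1 = p - 2 := by ring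
        rw [this]
      have htp : t ^ p = T * t * t := by
        rw [st12_rpow_sub_one ht0.le (by linarith : (1:ℝ) ≤ p), ← htp1]
      have hJval : p * (p - 1) * (∫ s in (0:ℝ)..1, (1 - s) * |c + s| ^ (p - 2))
          = T * (p * t - t ^ 2) + U := by
        have hp0' : p ≠ 0 := by linarith
        have hp1' : p - 1 ≠ 0 := by linarith
        rw [hcne, ← hsplit, htp1, htp]
        field_simp
        ring
      rw [habs, ← hT, hJval]
      rcases le_or_gt (1/2 : ℝ) t with htc | htc
      · -- 1/2 ≤ t < 1
        have hT8 : ((1/2:ℝ)) ^ (p - 2) ≤ T := by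
          rw [hT]; exact Real.rpow_le_rpow (by norm_num) (by linarith) hq
        have hEq : ((1/2:ℝ)) ^ (p - 2) * 2 ^ (p + 1) = 8 := by
          rw [one_div, Real.inv_rpow (by norm_num : (0:ℝ) ≤ 2)]
          rw [inv_mul_eq_div, div_eq_iff (by positivity : ((2:ℝ)) ^ (p - 2) ≠ 0)]
          rw [← h8, ← Real.rpow_add two_pos]
          congr 1; ring
        have hptt : p / 8 + 1 / 2 ≤ p * t - t ^ 2 := by
          nlinarith [mul_nonneg (by linarith : (0:ℝ) ≤ t - 1/2)
            (by linarith : (0:ℝ) ≤ p - t - 1/2)]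
        have hE2' : 8 * (1 / 2 ^ (p + 1)) ≤ T := by
          have h9 : 8 * (1 / 2 ^ (p + 1)) = ((1/2:ℝ)) ^ (p - 2) := by
            rw [← hEq]
            field_simp
          rw [h9]; exact hT8
        nlinarith [mul_le_mul_of_nonneg_left hptt hTnn']
      rcases le_or_gt (1/4 : ℝ) t with htc4 | htc4
      · -- 1/4 ≤ t < 1/2
        have hpt : p / 8 ≤ p * t - t ^ 2 := by
          nlinarith [mul_nonneg (by linarith : (0:ℝ) ≤ t - 1/4)
            (by linarith : (0:ℝ) ≤ p - t - 1/4)]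
        have hU2 : ((1/2:ℝ)) ^ p ≤ U := by
          rw [hU]; exact Real.rpow_le_rpow (by norm_num) (by linarith) (by linarith)
        have hUE : 1 / 2 ^ (p + 1) ≤ ((1/2:ℝ)) ^ p := by
          have h1 : ((1/2:ℝ)) ^ p = 1 / 2 ^ p := by
            rw [show ((1:ℝ)/2) = 2⁻¹ by norm_num,
              Real.inv_rpow (by norm_num : (0:ℝ) ≤ 2), one_div]
          rw [h1]
          exact one_div_le_one_div_of_le (by positivity)
            (Real.rpow_le_rpow_of_exponent_le (by norm_num) (by linarith))
        nlinarith [mul_le_mul_of_nonneg_left hpt hTnn']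
      · -- 0 < t < 1/4
        have hpt0 : (0:ℝ) ≤ p * t - t ^ 2 := by nlinarith
        have hTle : T ≤ ((1/4:ℝ)) ^ (p - 2) := by
          rw [hT]; exact Real.rpow_le_rpow ht0.le (by linarith) hq
        have hU3 : ((3/4:ℝ)) ^ p ≤ U := by
          rw [hU]; exact Real.rpow_le_rpow (by norm_num) (by linarith) (by linarith)
        have h4p : (0:ℝ) < 4 ^ p := Real.rpow_pos_of_pos (by norm_num) _
        have ha : ((1/4:ℝ)) ^ (p - 2) = 16 / 4 ^ p := by
          rw [one_div, Real.inv_rpow (by norm_num : (0:ℝ) ≤ 4)]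
          rw [show p - 2 = p + (-2) by ring, Real.rpow_add (by norm_num : (0:ℝ) < 4)]
          rw [show ((-2):ℝ) = ((-2:ℤ):ℝ) by norm_num, Real.rpow_intCast]
          rw [mul_inv]
          norm_num
          ring
        have hbb : ((3/4:ℝ)) ^ p = 3 ^ p / 4 ^ p :=
          Real.div_rpow (by norm_num) (by norm_num) p
        have hcc : (4:ℝ) ^ p = 2 ^ (p - 1) * 2 ^ (p + 1) := by
          rw [show (4:ℝ) = 2 * 2 by norm_num, Real.mul_rpow (by norm_num) (by norm_num)]
          rw [← Real.rpow_add two_pos, ← Real.rpow_add two_pos]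
          congr 1; ring
        have hE4 : 1 / 2 ^ (p + 1) = ((2:ℝ)) ^ (p - 1) / ((4:ℝ)) ^ p := by
          rw [hcc]
          rw [eq_div_iff (by positivity : ((2:ℝ)) ^ (p - 1) * 2 ^ (p + 1) ≠ 0)]
          field_simp
        have hkey : p / 8 * ((1/4:ℝ)) ^ (p - 2) + 1 / 2 ^ (p + 1) ≤ ((3/4:ℝ)) ^ p := by
          rw [ha, hbb, hE4]
          have e1 : p / 8 * (16 / 4 ^ p) = 2 * p / 4 ^ p := by ring
          rw [e1, ← add_div, div_le_div_iff₀ h4p h4p]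
          nlinarith [st12_num hp, h4p]
        have hstep := mul_le_mul_of_nonneg_left hTle (by linarith : (0:ℝ) ≤ p / 8)
        linarith [mul_nonneg hTnn' hpt0]

lemma st12_lower_pos {p : ℝ} (hp : 2 ≤ p) (a d : ℝ) (hd : 0 < d) :
    p / 8 * (|a| ^ (p - 2) * d ^ 2) + 1 / 2 ^ (p + 1) * |d| ^ p
      ≤ |a + d| ^ p - |a| ^ p - (p * |a| ^ (p - 2) * a) * d := by
  set c : ℝ := a / d with hc
  have hcd : a = c * d := by rw [hc, div_mul_cancel₀ a hd.ne']
  have habs : ∀ s : ℝ, |a + s * d| = d * |c + s| := by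
    intro s
    rw [hcd, show c * d + s * d = d * (c + s) by ring, abs_mul, abs_of_pos hd]
  have habs0 : |a| = d * |c| := by
    have h := habs 0
    simpa using h
  have hsc : ∀ s : ℝ, (1 - s) * |a + s * d| ^ (p - 2)
      = d ^ (p - 2) * ((1 - s) * |c + s| ^ (p - 2)) := by
    intro s
    rw [habs s, Real.mul_rpow hd.le (abs_nonneg _)]
    ring
  have hrep := st12_rep hp a d
  rw [intervalIntegral.integral_congr
    (g := fun s : ℝ => d ^ (p - 2) * ((1 - s) * |c + s| ^ (p - 2)))
    (fun s _ => hsc s), intervalIntegral.integral_const_mul] at hrep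
  have hcore := st12_core hp c
  have hdq : (0:ℝ) ≤ d ^ (p - 2) * d ^ 2 := by positivity
  have h1 := mul_le_mul_of_nonneg_left hcore hdq
  rw [hrep]
  have e1 : |a| ^ (p - 2) = d ^ (p - 2) * |c| ^ (p - 2) := by
    rw [habs0, Real.mul_rpow hd.le (abs_nonneg _)]
  have e2 : |d| ^ p = d ^ (p - 2) * d ^ 2 := by
    rw [abs_of_pos hd, st12_rpow_sub_one hd.le (by linarith : (1:ℝ) ≤ p),
      st12_rpow_sub_one hd.le (by linarith : (1:ℝ) ≤ p - 1)]
    have h : p - 1 - 1 = p - 2 := by ring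
    rw [h]; ring
  rw [e1, e2]
  nlinarith [h1]

lemma st12_lower {p : ℝ} (hp : 2 ≤ p) (a d : ℝ) :
    p / 8 * (|a| ^ (p - 2) * d ^ 2) + 1 / 2 ^ (p + 1) * |d| ^ p
      ≤ |a + d| ^ p - |a| ^ p - (p * |a| ^ (p - 2) * a) * d := by
  rcases lt_trichotomy d 0 with hd | hd | hd
  · have h := st12_lower_pos hp (-a) (-d) (by linarith)
    rw [show -a + -d = -(a + d) by ring] at h
    simp only [abs_neg, neg_neg, neg_sq, mul_neg, neg_mul] at h
    linarith
  · subst hd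
    simp [Real.zero_rpow (by linarith : p ≠ 0)]
  · exact st12_lower_pos hp a d hd

lemma st12_e {x : ℝ} (hx : 0 < x) : (1 + 1/x) ^ x ≤ 3 := by
  have hb : (0:ℝ) < 1 + 1/x := by positivity
  rw [Real.rpow_def_of_pos hb]
  have hlog : Real.log (1 + 1/x) ≤ 1/x := by
    have h := Real.log_le_sub_one_of_pos hb
    linarith
  have h1 : Real.log (1 + 1/x) * x ≤ 1 := by
    have h2 := mul_le_mul_of_nonneg_right hlog hx.le
    have h3 : 1/x*x = 1 := by field_simp
    rw [h3] at h2
    exact h2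
  calc Real.exp (Real.log (1 + 1/x) * x) ≤ Real.exp 1 := Real.exp_le_exp.mpr h1
    _ ≤ 3 := by linarith [Real.exp_one_lt_d9]

lemma st12_upper_pos {p : ℝ} (hp : 2 ≤ p) (a d : ℝ) (hd : 0 < d) :
    |a + d| ^ p - |a| ^ p - (p * |a| ^ (p - 2) * a) * d
      ≤ 2 * p ^ 2 * (|a| ^ (p - 2) * d ^ 2) + p ^ p * |d| ^ p := by
  have hq : (0:ℝ) ≤ p - 2 := by linarith
  have hrep := st12_rep hp a d
  have hmono : (∫ s in (0:ℝ)..1, (1 - s) * |a + s * d| ^ (p - 2))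
      ≤ ∫ s in (0:ℝ)..1, (1 - s) * (|a| + d) ^ (p - 2) := by
    apply intervalIntegral.integral_mono_on zero_le_one
      ((st12_cont_aux hp a d).intervalIntegrable 0 1)
      (((continuous_const.sub continuous_id).mul continuous_const).intervalIntegrable 0 1)
    intro s hs
    rw [Set.mem_Icc] at hs
    have h1 : |a + s * d| ≤ |a| + d := by
      calc |a + s * d| ≤ |a| + |s * d| := abs_add_le _ _
        _ ≤ |a| + d := by
            rw [abs_mul, abs_of_nonneg hs.1, abs_of_pos hd]
            nlinarith [hs.1, hs.2]
    exact mul_le_mul_of_nonneg_left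
      (Real.rpow_le_rpow (abs_nonneg _) h1 hq) (by linarith [hs.2])
  rw [intervalIntegral.integral_mul_const, st12_half] at hmono
  have hfac : (0:ℝ) ≤ p * (p - 1) * d ^ 2 :=
    mul_nonneg (mul_nonneg (by linarith) (by linarith)) (sq_nonneg d)
  have hR : |a + d| ^ p - |a| ^ p - (p * |a| ^ (p - 2) * a) * d
      ≤ p * (p - 1) * d ^ 2 * (1 / 2 * (|a| + d) ^ (p - 2)) := by
    rw [hrep]
    exact mul_le_mul_of_nonneg_left hmono hfac
  have habsd : |d| ^ p = d ^ (p - 2) * d ^ 2 := by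
    rw [abs_of_pos hd, st12_rpow_sub_one hd.le (by linarith : (1:ℝ) ≤ p),
      st12_rpow_sub_one hd.le (by linarith : (1:ℝ) ≤ p - 1)]
    have h : p - 1 - 1 = p - 2 := by ring
    rw [h]; ring
  have hTnn : (0:ℝ) ≤ |a| ^ (p - 2) := Real.rpow_nonneg (abs_nonneg a) _
  have hppos : (0:ℝ) < p := by linarith
  rcases le_or_gt ((p - 2) * d) |a| with hcase | hcase
  · -- small d case
    rcases eq_or_lt_of_le hp with h2 | h2
    · -- p = 2
      rw [← h2] at hR ⊢
      norm_num at hR ⊢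
      nlinarith [hR, Real.rpow_nonneg (abs_nonneg d) (2:ℝ),
        mul_nonneg (Real.rpow_nonneg (abs_nonneg d) (2:ℝ)) (le_of_lt (by norm_num : (0:ℝ) < 4)),
        sq_nonneg d]
    · -- p > 2
      have hapos : (0:ℝ) < |a| := lt_of_lt_of_le (by nlinarith) hcase
      have hx : (0:ℝ) < p - 2 := by linarith
      have hcomp : (|a| + d) ^ (p - 2) ≤ 3 * |a| ^ (p - 2) := by
        have h1 : |a| + d ≤ |a| * (1 + 1/(p - 2)) := by
          rw [mul_add, mul_one, mul_one_div]
          have : d ≤ |a| / (p - 2) := by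
            rw [le_div_iff₀ hx]
            linarith [hcase]
          linarith
        calc (|a| + d) ^ (p - 2) ≤ (|a| * (1 + 1/(p - 2))) ^ (p - 2) :=
              Real.rpow_le_rpow (by positivity) h1 hq
          _ = |a| ^ (p - 2) * (1 + 1/(p - 2)) ^ (p - 2) :=
              Real.mul_rpow (abs_nonneg a) (by positivity)
          _ ≤ |a| ^ (p - 2) * 3 :=
              mul_le_mul_of_nonneg_left (st12_e hx) hTnn
          _ = 3 * |a| ^ (p - 2) := by ring
      have hpp : (0:ℝ) ≤ p ^ p * |d| ^ p := by
        positivity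
      nlinarith [mul_le_mul_of_nonneg_left hcomp (by nlinarith : (0:ℝ) ≤ p * (p - 1) * d ^ 2 * (1/2)),
        mul_nonneg (mul_nonneg hTnn (sq_nonneg d)) (by nlinarith : (0:ℝ) ≤ p * (4 * p - 3 * (p - 1) / 2 - 2 * p))]
  · -- large d case
    have hx : (0:ℝ) < p - 2 := by nlinarith [abs_nonneg a]
    have hcomp : (|a| + d) ^ (p - 2) ≤ (p - 1) ^ (p - 2) * d ^ (p - 2) := by
      calc (|a| + d) ^ (p - 2) ≤ ((p - 1) * d) ^ (p - 2) :=
            Real.rpow_le_rpow (by positivity) (by nlinarith) hq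
        _ = (p - 1) ^ (p - 2) * d ^ (p - 2) :=
            Real.mul_rpow (by linarith) hd.le
    have hkey : p * (p - 1) * (1/2) * (p - 1) ^ (p - 2) ≤ p ^ p := by
      have e1 : (p - 1) * (p - 1) ^ (p - 2) = (p - 1) ^ (p - 1) := by
        rw [st12_rpow_sub_one (by linarith : (0:ℝ) ≤ p - 1) (by linarith : (1:ℝ) ≤ p - 1)]
        have h : p - 1 - 1 = p - 2 := by ring
        rw [h]; ring
      have e2 : p ^ p = p * p ^ (p - 1) := by
        rw [st12_rpow_sub_one (by linarith : (0:ℝ) ≤ p) (by linarith : (1:ℝ) ≤ p)]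
        ring
      have e3 : (p - 1) ^ (p - 1) ≤ p ^ (p - 1) :=
        Real.rpow_le_rpow (by linarith) (by linarith) (by linarith)
      have e4 : (0:ℝ) ≤ p ^ (p - 1) := Real.rpow_nonneg (by linarith) _
      nlinarith [e3, e4]
    have hdq : (0:ℝ) ≤ d ^ (p - 2) := Real.rpow_nonneg hd.le _
    have hfin : p * (p - 1) * d ^ 2 * (1/2 * (|a| + d) ^ (p - 2)) ≤ p ^ p * |d| ^ p := by
      rw [habsd]
      calc p * (p - 1) * d ^ 2 * (1/2 * (|a| + d) ^ (p - 2))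
          ≤ p * (p - 1) * d ^ 2 * (1/2 * ((p - 1) ^ (p - 2) * d ^ (p - 2))) := by
            apply mul_le_mul_of_nonneg_left _ hfac
            nlinarith [hcomp]
        _ = (p * (p - 1) * (1/2) * (p - 1) ^ (p - 2)) * (d ^ (p - 2) * d ^ 2) := by ring
        _ ≤ p ^ p * (d ^ (p - 2) * d ^ 2) :=
            mul_le_mul_of_nonneg_right hkey (by positivity)
    nlinarith [hfin, mul_nonneg (mul_nonneg (by nlinarith : (0:ℝ) ≤ 2 * p ^ 2) hTnn) (sq_nonneg d)]

lemma st12_upper {p : ℝ} (hp : 2 ≤ p) (a d : ℝ) :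
    |a + d| ^ p - |a| ^ p - (p * |a| ^ (p - 2) * a) * d
      ≤ 2 * p ^ 2 * (|a| ^ (p - 2) * d ^ 2) + p ^ p * |d| ^ p := by
  rcases lt_trichotomy d 0 with hd | hd | hd
  · have h := st12_upper_pos hp (-a) (-d) (by linarith)
    rw [show -a + -d = -(a + d) by ring] at h
    simp only [abs_neg, neg_neg, neg_sq, mul_neg, neg_mul] at h
    linarith
  · subst hd
    have h1 : (0:ℝ) ≤ 2 * p ^ 2 * (|a| ^ (p - 2) * 0 ^ 2) + p ^ p * |(0:ℝ)| ^ p := by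
      have := Real.rpow_nonneg (abs_nonneg (0:ℝ)) p
      have h2 : (0:ℝ) ≤ p ^ p := Real.rpow_nonneg (by linarith) p
      positivity
    simpa using h1
  · exact st12_upper_pos hp a d hd

theorem stmt12 {n : ℕ} (p : ℝ) (hp : 2 ≤ p) (x δ : Fin n → ℝ) :
    (p / 8) * (∑ i, |x i| ^ (p - 2) * (δ i) ^ 2)
        + (1 / 2 ^ (p + 1)) * (∑ i, |δ i| ^ p)
      ≤ (∑ i, |x i + δ i| ^ p) - (∑ i, |x i| ^ p)
          - ∑ i, (p * |x i| ^ (p - 2) * x i) * δ i ∧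
    (∑ i, |x i + δ i| ^ p) - (∑ i, |x i| ^ p)
          - ∑ i, (p * |x i| ^ (p - 2) * x i) * δ i
      ≤ 2 * p ^ 2 * (∑ i, |x i| ^ (p - 2) * (δ i) ^ 2) + p ^ p * (∑ i, |δ i| ^ p) := by
  have hdiff : (∑ i, |x i + δ i| ^ p) - (∑ i, |x i| ^ p)
      - ∑ i, (p * |x i| ^ (p - 2) * x i) * δ i
      = ∑ i, (|x i + δ i| ^ p - |x i| ^ p - (p * |x i| ^ (p - 2) * x i) * δ i) := by
    rw [Finset.sum_sub_distrib, Finset.sum_sub_distrib]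
  constructor
  · rw [hdiff, Finset.mul_sum, Finset.mul_sum, ← Finset.sum_add_distrib]
    apply Finset.sum_le_sum
    intro i _
    exact st12_lower hp (x i) (δ i)
  · rw [hdiff, Finset.mul_sum, Finset.mul_sum, ← Finset.sum_add_distrib]
    apply Finset.sum_le_sum
    intro i _
    exact st12_upper hp (x i) (δ i)
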